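/- The shift map σ on the full shift {0,1}^ℕ has mean ergodic shadowing. -/
import Mathlib

open Filter Metric

noncomputable def cnt (E : Set ℕ) (n : ℕ) : ℝ :=
  ∑ i ∈ Finset.range n, Set.indicator E (fun _ => (1 : ℝ)) i

def DensityZero (E : Set ℕ) : Prop :=
  Filter.Tendsto (fun n : ℕ => cnt E n / n) Filter.atTop (nhds 0)

noncomputable def upperDensity (E : Set ℕ) : ℝ :=
  Filter.limsup (fun n : ℕ => cnt E n / n) Filter.atTop

noncomputable def lowerDensity (E : Set ℕ) : ℝ :=
  Filter.liminf (fun n : ℕ => cnt E n / n) Filter.atTop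

variable {X : Type*}

def ErgodicPseudoOrbit [MetricSpace X] (f : X → X) (δ : ℝ) (ξ : ℕ → X) : Prop :=
  DensityZero {i | δ ≤ dist (f (ξ i)) (ξ (i + 1))}

def AvgShadows [MetricSpace X] (f : X → X) (ε : ℝ) (p : X) (ξ : ℕ → X) : Prop :=
  Filter.limsup (fun n : ℕ => (∑ i ∈ Finset.range n, dist (f^[i] p) (ξ i)) / n) Filter.atTop < ε

def MeanErgodicShadowingAvg [MetricSpace X] (f : X → X) : Prop :=
  ∀ ε > 0, ∃ δ > 0, ∀ ξ : ℕ → X, ErgodicPseudoOrbit f δ ξ → ∃ p : X, AvgShadows f ε p ξ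

def MeanErgodicShadowingDens [MetricSpace X] (f : X → X) : Prop :=
  ∀ ε > 0, ∃ δ > 0, ∀ ξ : ℕ → X, ErgodicPseudoOrbit f δ ξ →
    ∃ p : X, upperDensity {i | ε ≤ dist (f^[i] p) (ξ i)} < ε

def Shadowing [MetricSpace X] (f : X → X) : Prop :=
  ∀ ε > 0, ∃ δ > 0, ∀ ξ : ℕ → X, (∀ i, dist (f (ξ i)) (ξ (i + 1)) < δ) →
    ∃ p : X, ∀ i, dist (f^[i] p) (ξ i) < ε

attribute [local instance] PiNat.metricSpace

/-- The shift map on the full shift `{0,1}^ℕ`. -/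
def shiftMap : (ℕ → Bool) → (ℕ → Bool) := fun x n => x (n + 1)

/- auxiliary lemmas -/

lemma cnt_nonneg (E : Set ℕ) (n : ℕ) : 0 ≤ cnt E n :=
  Finset.sum_nonneg fun i _ => Set.indicator_nonneg (fun _ _ => zero_le_one) i

lemma cnt_mono {E F : Set ℕ} (h : E ⊆ F) (n : ℕ) : cnt E n ≤ cnt F n :=
  Finset.sum_le_sum fun i _ => Set.indicator_le_indicator_of_subset h (fun _ => zero_le_one) i

lemma div_le_div_nat {a b : ℝ} (h : a ≤ b) (n : ℕ) : a / n ≤ b / n := by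
  exact div_le_div_of_nonneg_right h (Nat.cast_nonneg n)

lemma cnt_union_le (E F : Set ℕ) (n : ℕ) : cnt (E ∪ F) n ≤ cnt E n + cnt F n := by
  unfold cnt
  rw [← Finset.sum_add_distrib]
  refine Finset.sum_le_sum fun i _ => ?_
  by_cases hE : i ∈ E
  · by_cases hF : i ∈ F <;>
      simp [Set.indicator_of_mem, hE, hF, Set.indicator_of_notMem]
  · by_cases hF : i ∈ F <;>
      simp [Set.indicator_of_mem, Set.indicator_of_notMem, hE, hF, Set.mem_union]

lemma densityZero_mono {E F : Set ℕ} (h : E ⊆ F) (hF : DensityZero F) : DensityZero E := by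
  refine tendsto_of_tendsto_of_tendsto_of_le_of_le tendsto_const_nhds hF
    (fun n => div_nonneg (cnt_nonneg E n) (Nat.cast_nonneg n))
    (fun n => div_le_div_nat (cnt_mono h n) n)

lemma densityZero_union {E F : Set ℕ} (hE : DensityZero E) (hF : DensityZero F) :
    DensityZero (E ∪ F) := by
  have h := hE.add hF
  rw [add_zero] at h
  refine tendsto_of_tendsto_of_tendsto_of_le_of_le tendsto_const_nhds h
    (fun n => div_nonneg (cnt_nonneg _ n) (Nat.cast_nonneg n)) (fun n => ?_)
  rw [← add_div]
  exact div_le_div_nat (cnt_union_le E F n) n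

lemma densityZero_shift {E : Set ℕ} (hE : DensityZero E) (k : ℕ) :
    DensityZero {i | i + k ∈ E} := by
  have h1 : Tendsto (fun n : ℕ => cnt E (n + k) / (n + k : ℕ)) atTop (nhds 0) :=
    hE.comp (tendsto_add_atTop_nat k)
  have h2 : Tendsto (fun n : ℕ => ((n + k : ℕ) : ℝ) / n) atTop (nhds 1) := by
    have : Tendsto (fun n : ℕ => 1 + (k : ℝ) / n) atTop (nhds 1) := by
      simpa using tendsto_const_nhds.add
        (Tendsto.div_atTop (tendsto_const_nhds (x := (k : ℝ))) tendsto_natCast_atTop_atTop)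
    refine this.congr' ?_
    filter_upwards [eventually_ge_atTop 1] with n hn
    have hn' : (n : ℝ) ≠ 0 := Nat.cast_ne_zero.2 (by omega)
    push_cast
    field_simp
  have h3 : Tendsto (fun n : ℕ => cnt E (n + k) / (n + k : ℕ) * (((n + k : ℕ) : ℝ) / n))
      atTop (nhds 0) := by simpa using h1.mul h2
  refine tendsto_of_tendsto_of_tendsto_of_le_of_le tendsto_const_nhds h3
    (fun n => div_nonneg (cnt_nonneg _ n) (Nat.cast_nonneg n)) (fun n => ?_)
  rcases Nat.eq_zero_or_pos n with rfl | hn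
  · simp
  have hn' : (n : ℝ) ≠ 0 := Nat.cast_ne_zero.2 (by omega)
  have hnk : ((n + k : ℕ) : ℝ) ≠ 0 := Nat.cast_ne_zero.2 (by omega)
  have key : cnt {i | i + k ∈ E} n ≤ cnt E (n + k) := by
    have : cnt {i | i + k ∈ E} n
        = ∑ i ∈ Finset.range n, Set.indicator E (fun _ => (1 : ℝ)) (i + k) := by
      refine Finset.sum_congr rfl fun i _ => ?_
      by_cases h : i + k ∈ E <;> simp [Set.indicator_of_mem, Set.indicator_of_notMem, h]
    rw [this]
    calc ∑ i ∈ Finset.range n, Set.indicator E (fun _ => (1 : ℝ)) (i + k)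
        = ∑ i ∈ Finset.Ico k (n + k), Set.indicator E (fun _ => (1 : ℝ)) i := by
          rw [Finset.sum_Ico_eq_sum_range]
          simp [add_comm, Nat.add_sub_cancel]
      _ ≤ cnt E (n + k) := by
          unfold cnt
          rw [Finset.range_eq_Ico]
          exact Finset.sum_le_sum_of_subset_of_nonneg
            (Finset.Ico_subset_Ico (Nat.zero_le _) le_rfl)
            (fun i _ _ => Set.indicator_nonneg (fun _ _ => zero_le_one) i)
  calc cnt {i | i + k ∈ E} n / n ≤ cnt E (n + k) / n := div_le_div_nat key n
    _ = cnt E (n + k) / (n + k : ℕ) * (((n + k : ℕ) : ℝ) / n) := by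
        field_simp

lemma densityZero_window {E : Set ℕ} (hE : DensityZero E) (N : ℕ) :
    DensityZero {i | ∃ k < N, i + k ∈ E} := by
  induction N with
  | zero =>
    have : {i : ℕ | ∃ k < 0, i + k ∈ E} = ∅ := by ext i; simp
    rw [this]
    unfold DensityZero cnt
    simp [Set.indicator_empty]
  | succ N ih =>
    refine densityZero_mono (F := {i | ∃ k < N, i + k ∈ E} ∪ {i | i + N ∈ E}) ?_
      (densityZero_union ih (densityZero_shift hE N))
    intro i hi
    obtain ⟨k, hk, hmem⟩ := hi
    rcases Nat.lt_succ_iff_lt_or_eq.1 hk with h | rfl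
    · exact Or.inl ⟨k, h, hmem⟩
    · exact Or.inr hmem

lemma shiftMap_iterate (i : ℕ) (x : ℕ → Bool) (n : ℕ) : (shiftMap^[i] x) n = x (n + i) := by
  induction i generalizing x n with
  | zero => rfl
  | succ i ih =>
    rw [Function.iterate_succ_apply, ih]
    show x (n + i + 1) = x (n + (i + 1))
    ring_nf

theorem stmt19 : MeanErgodicShadowingDens shiftMap := by
  intro ε hε
  obtain ⟨N, hN⟩ : ∃ N : ℕ, (1 / 2 : ℝ) ^ (N + 1) < ε := by
    obtain ⟨N, hN⟩ := exists_pow_lt_of_lt_one hε (by norm_num : (1 / 2 : ℝ) < 1)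
    exact ⟨N, lt_of_le_of_lt (pow_le_pow_of_le_one (by norm_num) (by norm_num) (by omega)) hN⟩
  refine ⟨(1 / 2) ^ N, by positivity, fun ξ hξ => ?_⟩
  set E : Set ℕ := {i | (1 / 2 : ℝ) ^ N ≤ dist (shiftMap (ξ i)) (ξ (i + 1))} with hEdef
  set p : ℕ → Bool := fun n => ξ n 0 with hp
  refine ⟨p, ?_⟩
  -- key combinatorial claim
  have key : ∀ j, ∀ i, (∀ k < j, i + k ∉ E) → j ≤ N → ξ i j = ξ (i + j) 0 := by
    intro j
    induction j with
    | zero => intro i _ _; rfl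
    | succ j ih =>
      intro i h hj
      have h0 : i ∉ E := h 0 (Nat.succ_pos j)
      have hd : dist (shiftMap (ξ i)) (ξ (i + 1)) < (1 / 2 : ℝ) ^ N := lt_of_not_ge h0
      have step : ξ i (j + 1) = ξ (i + 1) j := by
        have := PiNat.apply_eq_of_dist_lt hd (i := j) (by omega)
        exact this
      rw [step, ih (i + 1) (fun k hk => by
        have := h (k + 1) (by omega)
        simpa [add_assoc, add_comm, add_left_comm] using this) (by omega)]
      congr 1
      omega
  -- shadowing estimate
  have shadow : ∀ i, (∀ k < N, i + k ∉ E) → dist (shiftMap^[i] p) (ξ i) < ε := by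
    intro i hi
    have agree : ∀ j < N + 1, (shiftMap^[i] p) j = ξ i j := by
      intro j hj
      rw [shiftMap_iterate]
      have := key j i (fun k hk => hi k (by omega)) (by omega)
      rw [this]
      simp [hp, add_comm]
    have : dist (shiftMap^[i] p) (ξ i) ≤ (1 / 2 : ℝ) ^ (N + 1) := by
      have := PiNat.mem_cylinder_iff_dist_le.1 (PiNat.mem_cylinder_iff.2 agree)
      exact this
    exact lt_of_le_of_lt this hN
  -- bad set is contained in window set
  have hsub : {i | ε ≤ dist (shiftMap^[i] p) (ξ i)} ⊆ {i | ∃ k < N, i + k ∈ E} := by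
    intro i hi
    by_contra h
    rw [Set.mem_setOf_eq] at h
    push_neg at h
    exact absurd hi (not_le.2 (shadow i h))
  have hdz : DensityZero {i | ε ≤ dist (shiftMap^[i] p) (ξ i)} :=
    densityZero_mono hsub (densityZero_window hξ N)
  have : upperDensity {i | ε ≤ dist (shiftMap^[i] p) (ξ i)} = 0 := hdz.limsup_eq
  rw [this]
  exact hε
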